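/- arXiv:1501.05319 — 3 statements merged into one kernel-verified Lean document; each statement's English description precedes it below -/
import Mathlib

section
/- For an odd prime p and B, B' ∈ Z_p with B ≠ B', the bases {|ψ_B^V⟩ : V ∈ Z_p} and {|ψ_{B'}^{V'}⟩ : V' ∈ Z_p} are mutually unbiased: |⟨ψ_B^V | ψ_{B'}^{V'}⟩| = 1/√p for all V, V' ∈ Z_p. -/
open Complex Matrix BigOperators Finset
open scoped Kronecker

noncomputable section

/-- Additive character `a ↦ exp(2πi a/p)` on `ZMod p`. -/
def chi (p : ℕ) (a : ZMod p) : ℂ := Complex.exp (2 * Real.pi * Complex.I * (a.val : ℂ) / p)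

/-- The shift operator `X : |j⟩ ↦ |j+1⟩`. -/
def Xop (p : ℕ) : Matrix (ZMod p) (ZMod p) ℂ := fun j k => if j = k + 1 then 1 else 0

/-- The clock operator `Z : |j⟩ ↦ ω^j |j⟩`. -/
def Zop (p : ℕ) : Matrix (ZMod p) (ZMod p) ℂ := Matrix.diagonal (fun j => chi p j)

/-- Weyl-Heisenberg displacement operator `D_(x|z) = ω^{2⁻¹ x z} X^x Z^z`. -/
def Dop (p : ℕ) [NeZero p] (x z : ZMod p) : Matrix (ZMod p) (ZMod p) ℂ :=
  chi p ((2 : ZMod p)⁻¹ * x * z) • (Xop p ^ x.val * Zop p ^ z.val)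

/-- The stabilizer MUB vector `|ψ_B^V⟩ = p^{-1/2} Σ_k ω^{2⁻¹ B k² - V k} |k⟩`. -/
def psi (p : ℕ) (B V : ZMod p) : ZMod p → ℂ :=
  fun k => ((Real.sqrt p : ℂ))⁻¹ * chi p ((2 : ZMod p)⁻¹ * B * k ^ 2 - V * k)

/-- The magic state `|f_{a,b,c}⟩ = p^{-1/2} Σ_k ω^{a k³ + b k² + c k} |k⟩`. -/
def magic (p : ℕ) (a b c : ZMod p) : ZMod p → ℂ :=
  fun k => ((Real.sqrt p : ℂ))⁻¹ * chi p (a * k ^ 3 + b * k ^ 2 + c * k)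

/-- Rank-one projector `|v⟩⟨v|`. -/
def proj (p : ℕ) (v : ZMod p → ℂ) : Matrix (ZMod p) (ZMod p) ℂ :=
  fun i j => v i * (starRingEnd ℂ) (v j)

/-- The single-qudit operator `S = Σ_B |ψ_B^{-B(B+2⁻¹)}⟩⟨ψ_B^{-B(B+2⁻¹)}|`. -/
def Sop (p : ℕ) [NeZero p] : Matrix (ZMod p) (ZMod p) ℂ :=
  ∑ B : ZMod p, proj p (psi p B (-B * (B + (2 : ZMod p)⁻¹)))


/-- primitive p-th root of unity -/
def om (p : ℕ) : ℂ := Complex.exp (2 * Real.pi * Complex.I / p)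

lemma chi_eq_pow (p : ℕ) (a : ZMod p) : chi p a = om p ^ a.val := by
  rw [om, chi, ← Complex.exp_nat_mul]
  congr 1
  ring

lemma om_pow_p (p : ℕ) [NeZero p] : om p ^ p = 1 := by
  rw [om, ← Complex.exp_nat_mul]
  have hp : (p : ℂ) ≠ 0 := Nat.cast_ne_zero.mpr (NeZero.ne p)
  have h : (p:ℂ) * (2 * Real.pi * Complex.I / p) = 2 * Real.pi * Complex.I := by field_simp
  rw [h, Complex.exp_two_pi_mul_I]

lemma om_pow_mod (p : ℕ) [NeZero p] (n : ℕ) : om p ^ (n % p) = om p ^ n := by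
  conv_rhs => rw [← Nat.div_add_mod n p]
  rw [pow_add, pow_mul, om_pow_p, one_pow, one_mul]

lemma chi_add (p : ℕ) [NeZero p] (a b : ZMod p) : chi p (a + b) = chi p a * chi p b := by
  rw [chi_eq_pow, chi_eq_pow, chi_eq_pow, ZMod.val_add, om_pow_mod, pow_add]

lemma chi_zero (p : ℕ) [NeZero p] : chi p 0 = 1 := by
  rw [chi_eq_pow, ZMod.val_zero, pow_zero]

lemma chi_neg (p : ℕ) [NeZero p] (a : ZMod p) : chi p (-a) = (chi p a)⁻¹ := by
  have h : chi p (-a) * chi p a = 1 := by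
    rw [← chi_add, neg_add_cancel, chi_zero]
  exact eq_inv_of_mul_eq_one_left h

lemma chi_conj (p : ℕ) [NeZero p] (a : ZMod p) :
    (starRingEnd ℂ) (chi p a) = chi p (-a) := by
  rw [chi_neg, chi, ← Complex.exp_conj, ← Complex.exp_neg]
  congr 1
  simp only [map_neg, _root_.map_mul, map_div₀, Complex.conj_I, Complex.conj_ofReal, map_natCast,
    map_ofNat]
  ring

lemma sum_chi_eq_zero (p : ℕ) [Fact p.Prime] : ∑ y : ZMod p, chi p y = 0 := by
  have hp : p.Prime := Fact.out
  have h1 : ∑ y : ZMod p, chi p y = ∑ i ∈ Finset.range p, om p ^ i := by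
    simp_rw [chi_eq_pow]
    apply Finset.sum_nbij' (fun y => ZMod.val y) (fun i => (i : ZMod p)) <;>
      intros <;> simp_all [ZMod.val_lt, ZMod.val_cast_of_lt, Finset.mem_range, Nat.mod_eq_of_lt]
  rw [h1]
  have := Complex.isPrimitiveRoot_exp p hp.ne_zero
  exact this.geom_sum_eq_zero hp.one_lt

lemma sum_chi_mul (p : ℕ) [Fact p.Prime] (a : ZMod p) :
    ∑ x : ZMod p, chi p (a * x) = if a = 0 then (p : ℂ) else 0 := by
  split_ifs with ha
  · simp [ha, chi_zero, Finset.card_univ]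
  · have hbij : Function.Bijective (fun x : ZMod p => a * x) :=
      (Equiv.mulLeft₀ a ha).bijective
    rw [Fintype.sum_bijective _ hbij (fun x => chi p (a * x)) (fun y => chi p y)
      (fun x => rfl)]
    exact sum_chi_eq_zero p

theorem stmt2 (p : ℕ) [Fact p.Prime] (hp2 : p ≠ 2) (B B' V V' : ZMod p) (hBB : B ≠ B') :
    ‖∑ k : ZMod p, (starRingEnd ℂ) (psi p B V k) * psi p B' V' k‖
      = 1 / Real.sqrt p := by
  have hp : p.Prime := Fact.out
  have hppos : (0:ℝ) < p := by exact_mod_cast hp.pos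
  have h2 : (2 : ZMod p) ≠ 0 := by
    intro h
    have h2' : ((2:ℕ) : ZMod p) = 0 := by exact_mod_cast h
    have hdvd : p ∣ 2 := (ZMod.natCast_eq_zero_iff 2 p).mp h2'
    exact hp2 ((Nat.prime_dvd_prime_iff_eq hp Nat.prime_two).mp hdvd)
  set c : ZMod p := (2 : ZMod p)⁻¹ * (B' - B) with hc_def
  have hc : c ≠ 0 := mul_ne_zero (inv_ne_zero h2) (sub_ne_zero.mpr (Ne.symm hBB))
  set d : ZMod p := V - V' with hd_def
  set T : ℂ := ∑ k : ZMod p, chi p (c * k ^ 2 + d * k) with hT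
  have hterm : ∀ k : ZMod p, (starRingEnd ℂ) (psi p B V k) * psi p B' V' k
      = ((p : ℂ))⁻¹ * chi p (c * k ^ 2 + d * k) := by
    intro k
    unfold psi
    rw [_root_.map_mul, map_inv₀, Complex.conj_ofReal, chi_conj, mul_mul_mul_comm, ← chi_add]
    congr 1
    · rw [← mul_inv, ← Complex.ofReal_mul, Real.mul_self_sqrt hppos.le]
      push_cast
      ring
    · congr 1
      rw [hc_def, hd_def]
      ring
  have hS : (∑ k : ZMod p, (starRingEnd ℂ) (psi p B V k) * psi p B' V' k)
      = (p:ℂ)⁻¹ * T := by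
    rw [hT, Finset.mul_sum]
    exact Finset.sum_congr rfl fun k _ => hterm k
  have hTT : T * (starRingEnd ℂ) T = (p : ℂ) := by
    rw [hT, map_sum, Finset.sum_mul_sum]
    simp_rw [chi_conj]
    rw [Finset.sum_comm]
    have step : ∀ l : ZMod p,
        (∑ k : ZMod p, chi p (c*k^2 + d*k) * chi p (-(c*l^2 + d*l)))
        = ∑ m : ZMod p, chi p (c*m^2 + d*m) * chi p ((2*c*m) * l) := by
      intro l
      refine (Fintype.sum_bijective (fun m : ZMod p => l + m) (Equiv.addLeft l).bijective
        (fun m => chi p (c*m^2 + d*m) * chi p ((2*c*m) * l))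
        (fun k => chi p (c*k^2 + d*k) * chi p (-(c*l^2 + d*l))) (fun m => ?_)).symm
      simp only [← chi_add]
      congr 1
      ring
    simp_rw [step]
    rw [Finset.sum_comm]
    have inner : ∀ m : ZMod p,
        (∑ l : ZMod p, chi p (c*m^2 + d*m) * chi p ((2*c*m) * l))
        = chi p (c*m^2 + d*m) * (if m = 0 then (p:ℂ) else 0) := by
      intro m
      rw [← Finset.mul_sum, sum_chi_mul]
      congr 1
      have h2cm : 2*c*m = 0 ↔ m = 0 := by
        constructor
        · intro h
          rcases mul_eq_zero.mp h with h' | h'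
          · exact absurd h' (mul_ne_zero h2 hc)
          · exact h'
        · intro h; rw [h, mul_zero]
      simp [h2cm]
    simp_rw [inner]
    rw [Finset.sum_eq_single (0 : ZMod p)]
    · rw [if_pos rfl]
      have h0 : c * 0^2 + d * 0 = 0 := by ring
      rw [h0, chi_zero, one_mul]
    · intro b _ hb
      rw [if_neg hb, mul_zero]
    · intro h
      exact absurd (Finset.mem_univ _) h
  have habsT : ‖T‖ = Real.sqrt p := by
    rw [mul_comm, Complex.conj_mul'] at hTT
    have hns : ‖T‖ ^ 2 = p := by
      have h : ‖T‖ ^ 2 = (p:ℝ) := by exact_mod_cast hTT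
      simpa using h
    have h2' : ‖T‖ = Real.sqrt ((‖T‖) ^ 2) :=
      (Real.sqrt_sq (norm_nonneg T)).symm
    rw [h2', hns]
  rw [hS, norm_mul, norm_inv, Complex.norm_natCast, habsT]
  have hsp : Real.sqrt p ≠ 0 := by positivity
  rw [eq_div_iff hsp, mul_assoc, Real.mul_self_sqrt hppos.le, inv_mul_cancel₀ hppos.ne']
end
end

section
/- Assume the Weil bound: for p prime > 3 and any cubic polynomial f over Z_p with nonzero leading coefficient, |Σ_{x∈Z_p} ω^{f(x)}| ≤ 2√p. Then every eigenvalue of the operator S = Σ_{B∈Z_p} |ψ_B^{-B(B+2^{-1})}⟩⟨ψ_B^{-B(B+2^{-1})}| is at most 4 (for p > 3), i.e., the operator norm of S is at most 4. -/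
open Complex Matrix BigOperators Finset
open scoped Kronecker

noncomputable section

/-! ### Auxiliary lemmas -/

set_option linter.unusedSectionVars false

namespace Stmt11Aux

variable (p : ℕ) [Fact p.Prime]

lemma chi_eq_pow (a : ZMod p) : chi p a = Complex.exp (2 * Real.pi * Complex.I / p) ^ a.val := by
  rw [chi, ← Complex.exp_nat_mul]; ring_nf

lemma zeta_pow_p : Complex.exp (2 * Real.pi * Complex.I / p) ^ p = 1 := by
  rw [← Complex.exp_nat_mul]
  have hp : (p : ℂ) ≠ 0 := Nat.cast_ne_zero.mpr (Fact.out (p := p.Prime)).ne_zero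
  have : (p : ℂ) * (2 * Real.pi * Complex.I / p) = 2 * Real.pi * Complex.I := by
    field_simp
  rw [this, Complex.exp_two_pi_mul_I]

lemma chi_add (a b : ZMod p) : chi p (a + b) = chi p a * chi p b := by
  rw [chi_eq_pow, chi_eq_pow, chi_eq_pow, ← pow_add]
  have h : a.val + b.val = p * ((a.val + b.val) / p) + (a + b).val := by
    rw [ZMod.val_add, Nat.div_add_mod]
  rw [h, pow_add, pow_mul, zeta_pow_p, one_pow, one_mul]

lemma chi_zero : chi p 0 = 1 := by simp [chi]

lemma chi_ne_zero (a : ZMod p) : chi p a ≠ 0 := Complex.exp_ne_zero _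

lemma chi_conj (a : ZMod p) : (starRingEnd ℂ) (chi p a) = chi p (-a) := by
  have h : chi p (-a) * chi p a = 1 := by rw [← chi_add]; simp [chi_zero]
  have h2 : (starRingEnd ℂ) (chi p a) * chi p a = 1 := by
    rw [chi, ← Complex.exp_conj, ← Complex.exp_add]
    have : (starRingEnd ℂ) (2 * ↑Real.pi * Complex.I * (ZMod.val a : ℂ) / ↑p)
        = -(2 * ↑Real.pi * Complex.I * (ZMod.val a : ℂ) / ↑p) := by
      simp [-ZMod.natCast_val, map_div₀, Complex.conj_I, Complex.conj_ofReal, map_ofNat]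
      ring
    rw [this, neg_add_cancel, Complex.exp_zero]
  exact mul_right_cancel₀ (chi_ne_zero p a) (h2.trans h.symm)

lemma chi_sub (a b : ZMod p) : chi p (a - b) = chi p a * (starRingEnd ℂ) (chi p b) := by
  rw [chi_conj, ← chi_add, sub_eq_add_neg]

lemma chi_comb (x y z : ZMod p) :
    chi p (x - y + z) = chi p x * (starRingEnd ℂ) (chi p y) * chi p z := by
  rw [chi_add, chi_sub]

lemma chi_one_ne_one (hp3 : 3 < p) : chi p 1 ≠ 1 := by
  have hval : ((1 : ZMod p)).val = 1 := ZMod.val_one p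
  rw [chi, hval]
  intro hc
  rw [Complex.exp_eq_one_iff] at hc
  obtain ⟨n, hn⟩ := hc
  rw [Nat.cast_one] at hn
  have hp : (p : ℂ) ≠ 0 := Nat.cast_ne_zero.mpr (by omega)
  have hpi : (Real.pi : ℂ) ≠ 0 := Complex.ofReal_ne_zero.mpr Real.pi_ne_zero
  have hI : (2 * (Real.pi:ℂ) * Complex.I) ≠ 0 := by
    simp [Real.pi_ne_zero, Complex.I_ne_zero, hpi]
  have h1 : ((n * p : ℤ) : ℂ) = 1 := by
    push_cast
    field_simp at hn
    have := mul_left_cancel₀ hI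
      (show (2 * (Real.pi:ℂ) * Complex.I) * 1 = (2 * (Real.pi:ℂ) * Complex.I) * ((n:ℂ) * p) by
        linear_combination (2 * (Real.pi:ℂ) * Complex.I) * hn)
    linear_combination this.symm
  have h2 : (n * p : ℤ) = 1 := by exact_mod_cast h1
  have : (p : ℤ) ≤ 1 := Int.le_of_dvd one_pos ⟨n, by linarith⟩
  omega

lemma sum_chi (hp3 : 3 < p) : ∑ d : ZMod p, chi p d = 0 := by
  have h : chi p 1 * ∑ d : ZMod p, chi p d = ∑ d : ZMod p, chi p d := by
    rw [Finset.mul_sum]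
    calc ∑ d : ZMod p, chi p 1 * chi p d
        = ∑ d : ZMod p, chi p (d + 1) := by
          refine Fintype.sum_congr _ _ (fun d => ?_)
          rw [chi_add]; ring
      _ = ∑ d : ZMod p, chi p d :=
          Fintype.sum_equiv (Equiv.addRight (1 : ZMod p)) _ _ (fun d => rfl)
  have h2 : (chi p 1 - 1) * ∑ d : ZMod p, chi p d = 0 := by ring_nf; linear_combination h
  rcases mul_eq_zero.mp h2 with h3 | h3
  · exact absurd (by linear_combination h3) (chi_one_ne_one p hp3)
  · exact h3

lemma sum_chi_mul (hp3 : 3 < p) (m : ZMod p) (hm : m ≠ 0) :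
    ∑ c : ZMod p, chi p (c * m) = 0 := by
  have : ∑ c : ZMod p, chi p (c * m) = ∑ d : ZMod p, chi p d :=
    Fintype.sum_equiv (Equiv.mulRight₀ m hm) _ _ (fun c => rfl)
  rw [this, sum_chi p hp3]

lemma two_ne (hp3 : 3 < p) : (2 : ZMod p) ≠ 0 := by
  have : ((2:ℕ) : ZMod p) ≠ 0 := by
    rw [Ne, ZMod.natCast_eq_zero_iff]
    intro h
    have := Nat.le_of_dvd (by norm_num) h
    omega
  exact_mod_cast this

lemma eight_ne (hp3 : 3 < p) : (8 : ZMod p) ≠ 0 := by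
  have hp : p.Prime := Fact.out
  have : ((8:ℕ) : ZMod p) ≠ 0 := by
    rw [Ne, ZMod.natCast_eq_zero_iff]
    intro h
    have hle : p ≤ 8 := Nat.le_of_dvd (by norm_num) h
    interval_cases p <;> revert hp h <;> decide
  exact_mod_cast this

lemma twelve_ne (hp3 : 3 < p) : (12 : ZMod p) ≠ 0 := by
  have hp : p.Prime := Fact.out
  have : ((12:ℕ) : ZMod p) ≠ 0 := by
    rw [Ne, ZMod.natCast_eq_zero_iff]
    intro h
    have hle : p ≤ 12 := Nat.le_of_dvd (by norm_num) h
    interval_cases p <;> revert hp h <;> decide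
  exact_mod_cast this

/-- The cubic character sum. -/
def Tsum (c : ZMod p) : ℂ :=
  ∑ x : ZMod p, chi p ((-(12:ZMod p)⁻¹) * x ^ 3 + (-(8:ZMod p)⁻¹) * x ^ 2 + c * x)

lemma key_ring (hp3 : 3 < p) (i j B c : ZMod p) :
    ((2:ZMod p)⁻¹ * B * i^2 - (-B*(B+(2:ZMod p)⁻¹))*i)
      - ((2:ZMod p)⁻¹ * B * j^2 - (-B*(B+(2:ZMod p)⁻¹))*j)
      + ((-(12:ZMod p)⁻¹) * j^3 + (-(8:ZMod p)⁻¹) * j^2 + c*j)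
    = ((-(12:ZMod p)⁻¹) * (2*B+j)^3 + (-(8:ZMod p)⁻¹) * (2*B+j)^2 + c*(2*B+j))
      - ((-(12:ZMod p)⁻¹) * (2*B+i)^3 + (-(8:ZMod p)⁻¹) * (2*B+i)^2 + c*(2*B+i))
      + ((-(12:ZMod p)⁻¹) * i^3 + (-(8:ZMod p)⁻¹) * i^2 + c*i) := by
  have h2 := two_ne p hp3
  have h8 := eight_ne p hp3
  have h12 := twelve_ne p hp3
  field_simp
  ring

lemma sqrt_ne : ((Real.sqrt p : ℂ)) ≠ 0 := by
  have hp : 0 < p := (Fact.out (p := p.Prime)).pos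
  simp only [Ne, Complex.ofReal_eq_zero]
  positivity

lemma conj_s : (starRingEnd ℂ) ((Real.sqrt p : ℂ))⁻¹ = ((Real.sqrt p : ℂ))⁻¹ := by
  rw [map_inv₀, Complex.conj_ofReal]

lemma sqrt_sq : (((Real.sqrt p : ℝ) : ℂ))⁻¹ ^ 2 = (p : ℂ)⁻¹ := by
  rw [inv_pow]
  congr 1
  rw [← Complex.ofReal_pow, Real.sq_sqrt (by positivity : (0:ℝ) ≤ (p:ℝ))]
  norm_cast

lemma reindex (F : ZMod p → ZMod p → ℂ) (hp3 : 3 < p) (i : ZMod p) :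
    ∑ j : ZMod p, ∑ B : ZMod p, F (2*B+j) (2*B+i) = ∑ x : ZMod p, ∑ y : ZMod p, F x y := by
  have h2 := two_ne p hp3
  have e1 : ∀ j : ZMod p, ∑ B : ZMod p, F (2*B+j) (2*B+i) = ∑ y : ZMod p, F (y + j - i) y := by
    intro j
    refine Fintype.sum_equiv
      ⟨fun B => 2*B+i, fun y => (2:ZMod p)⁻¹ * (y - i),
        fun B => by field_simp; ring, fun y => by field_simp; ring⟩ _ _ (fun B => ?_)
    show F (2*B+j) (2*B+i) = F ((2*B+i) + j - i) (2*B+i)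
    have h : (2*B+i) + j - i = 2*B + j := by ring
    rw [h]
  simp only [e1]
  rw [Finset.sum_comm]
  conv_rhs => rw [Finset.sum_comm]
  refine Finset.sum_congr rfl (fun y _ => ?_)
  exact Fintype.sum_equiv
      ⟨fun j => y + j - i, fun x => x - y + i, fun j => by ring_nf, fun x => by ring_nf⟩
      _ _ (fun j => rfl)

lemma term_comb (u w z : ZMod p) :
    (((Real.sqrt p : ℂ))⁻¹ * chi p u) * (starRingEnd ℂ) (((Real.sqrt p : ℂ))⁻¹ * chi p w)
      * (((Real.sqrt p : ℂ))⁻¹ * chi p z)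
    = ((Real.sqrt p : ℂ))⁻¹ ^ 3 * chi p (u - w + z) := by
  rw [chi_comb, _root_.map_mul, conj_s]
  ring

/-- The magic states are eigenvectors of `Sop`. -/
lemma eig (hp3 : 3 < p) (c : ZMod p) :
    Sop p *ᵥ magic p (-(12:ZMod p)⁻¹) (-(8:ZMod p)⁻¹) c
      = ((Tsum p c * (starRingEnd ℂ) (Tsum p c)) / p) •
          magic p (-(12:ZMod p)⁻¹) (-(8:ZMod p)⁻¹) c := by
  have h2 := two_ne p hp3
  funext i
  have step1 : (Sop p *ᵥ magic p (-(12:ZMod p)⁻¹) (-(8:ZMod p)⁻¹) c) i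
      = ∑ j : ZMod p, ∑ B : ZMod p, ((Real.sqrt p : ℂ))⁻¹ ^ 3 *
          chi p (((-(12:ZMod p)⁻¹) * (2*B+j)^3 + (-(8:ZMod p)⁻¹) * (2*B+j)^2 + c*(2*B+j))
            - ((-(12:ZMod p)⁻¹) * (2*B+i)^3 + (-(8:ZMod p)⁻¹) * (2*B+i)^2 + c*(2*B+i))
            + ((-(12:ZMod p)⁻¹) * i^3 + (-(8:ZMod p)⁻¹) * i^2 + c*i)) := by
    rw [Matrix.mulVec, dotProduct]
    refine Finset.sum_congr rfl (fun j _ => ?_)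
    rw [Sop, Matrix.sum_apply, Finset.sum_mul]
    refine Finset.sum_congr rfl (fun B _ => ?_)
    simp only [proj, psi, magic]
    rw [term_comb, key_ring p hp3 i j B c]
  rw [step1]
  have step2 : ∑ j : ZMod p, ∑ B : ZMod p, ((Real.sqrt p : ℂ))⁻¹ ^ 3 *
          chi p (((-(12:ZMod p)⁻¹) * (2*B+j)^3 + (-(8:ZMod p)⁻¹) * (2*B+j)^2 + c*(2*B+j))
            - ((-(12:ZMod p)⁻¹) * (2*B+i)^3 + (-(8:ZMod p)⁻¹) * (2*B+i)^2 + c*(2*B+i))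
            + ((-(12:ZMod p)⁻¹) * i^3 + (-(8:ZMod p)⁻¹) * i^2 + c*i))
      = ∑ x : ZMod p, ∑ y : ZMod p, ((Real.sqrt p : ℂ))⁻¹ ^ 3 *
          chi p (((-(12:ZMod p)⁻¹) * x^3 + (-(8:ZMod p)⁻¹) * x^2 + c*x)
            - ((-(12:ZMod p)⁻¹) * y^3 + (-(8:ZMod p)⁻¹) * y^2 + c*y)
            + ((-(12:ZMod p)⁻¹) * i^3 + (-(8:ZMod p)⁻¹) * i^2 + c*i)) := by
    exact reindex p (fun x y => ((Real.sqrt p : ℂ))⁻¹ ^ 3 *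
          chi p (((-(12:ZMod p)⁻¹) * x^3 + (-(8:ZMod p)⁻¹) * x^2 + c*x)
            - ((-(12:ZMod p)⁻¹) * y^3 + (-(8:ZMod p)⁻¹) * y^2 + c*y)
            + ((-(12:ZMod p)⁻¹) * i^3 + (-(8:ZMod p)⁻¹) * i^2 + c*i))) hp3 i
  rw [step2]
  have step3 : ∀ x : ZMod p, ∑ y : ZMod p, ((Real.sqrt p : ℂ))⁻¹ ^ 3 *
          chi p (((-(12:ZMod p)⁻¹) * x^3 + (-(8:ZMod p)⁻¹) * x^2 + c*x)
            - ((-(12:ZMod p)⁻¹) * y^3 + (-(8:ZMod p)⁻¹) * y^2 + c*y)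
            + ((-(12:ZMod p)⁻¹) * i^3 + (-(8:ZMod p)⁻¹) * i^2 + c*i))
      = chi p ((-(12:ZMod p)⁻¹) * x^3 + (-(8:ZMod p)⁻¹) * x^2 + c*x) *
          ((starRingEnd ℂ) (Tsum p c) * (((Real.sqrt p : ℂ))⁻¹ ^ 3 *
           chi p ((-(12:ZMod p)⁻¹) * i^3 + (-(8:ZMod p)⁻¹) * i^2 + c*i))) := by
    intro x
    rw [Tsum, map_sum (starRingEnd ℂ), Finset.sum_mul, Finset.mul_sum]
    refine Finset.sum_congr rfl (fun y _ => ?_)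
    rw [chi_comb]
    ring
  simp only [step3]
  rw [← Finset.sum_mul]
  rw [show (∑ x : ZMod p, chi p ((-(12:ZMod p)⁻¹) * x^3 + (-(8:ZMod p)⁻¹) * x^2 + c*x))
      = Tsum p c from rfl]
  simp only [Pi.smul_apply, smul_eq_mul, magic]
  have h3 : ((Real.sqrt p : ℂ))⁻¹ ^ 3 = (p:ℂ)⁻¹ * ((Real.sqrt p : ℂ))⁻¹ := by
    rw [pow_succ, sqrt_sq]
  rw [h3]
  ring

lemma Sop_conj (i j : ZMod p) : (starRingEnd ℂ) (Sop p i j) = Sop p j i := by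
  rw [Sop, Matrix.sum_apply, Matrix.sum_apply, map_sum (starRingEnd ℂ)]
  refine Finset.sum_congr rfl (fun B _ => ?_)
  simp only [proj]
  rw [_root_.map_mul, Complex.conj_conj]
  ring

lemma complete (hp3 : 3 < p) (v : ZMod p → ℂ) (hv : v ≠ 0) :
    ∃ c : ZMod p, (∑ j : ZMod p,
      (starRingEnd ℂ) (magic p (-(12:ZMod p)⁻¹) (-(8:ZMod p)⁻¹) c j) * v j) ≠ 0 := by
  by_contra hall
  push_neg at hall
  obtain ⟨k, hk⟩ : ∃ k, v k ≠ 0 := Function.ne_iff.mp hv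
  have h0 : ∑ c : ZMod p, chi p (c * k) * ∑ j : ZMod p,
      (starRingEnd ℂ) (magic p (-(12:ZMod p)⁻¹) (-(8:ZMod p)⁻¹) c j) * v j = 0 := by
    simp [hall]
  have hterm : ∀ c j : ZMod p, chi p (c*k) *
        ((starRingEnd ℂ) (magic p (-(12:ZMod p)⁻¹) (-(8:ZMod p)⁻¹) c j) * v j)
      = chi p (c*(k-j)) * (((Real.sqrt p : ℂ))⁻¹ *
          chi p (-((-(12:ZMod p)⁻¹)*j^3 + (-(8:ZMod p)⁻¹)*j^2)) * v j) := by
    intro c j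
    simp only [magic]
    rw [_root_.map_mul, conj_s, chi_conj]
    rw [show chi p (c*k) * (((Real.sqrt p : ℂ))⁻¹ *
          chi p (-((-(12:ZMod p)⁻¹)*j^3 + (-(8:ZMod p)⁻¹)*j^2 + c*j)) * v j)
        = (chi p (c*k) * chi p (-((-(12:ZMod p)⁻¹)*j^3 + (-(8:ZMod p)⁻¹)*j^2 + c*j)))
            * (((Real.sqrt p : ℂ))⁻¹ * v j) from by ring]
    rw [← chi_add, show c*k + -((-(12:ZMod p)⁻¹)*j^3 + (-(8:ZMod p)⁻¹)*j^2 + c*j)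
        = c*(k-j) + -((-(12:ZMod p)⁻¹)*j^3 + (-(8:ZMod p)⁻¹)*j^2) from by ring, chi_add]
    ring
  have h1 : ∑ c : ZMod p, chi p (c * k) * ∑ j : ZMod p,
        (starRingEnd ℂ) (magic p (-(12:ZMod p)⁻¹) (-(8:ZMod p)⁻¹) c j) * v j
      = ∑ j : ZMod p, (∑ c : ZMod p, chi p (c * (k - j))) * (((Real.sqrt p : ℂ))⁻¹ *
          chi p (-((-(12:ZMod p)⁻¹)*j^3 + (-(8:ZMod p)⁻¹)*j^2)) * v j) := by
    simp only [Finset.mul_sum]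
    rw [Finset.sum_comm]
    refine Finset.sum_congr rfl (fun j _ => ?_)
    rw [Finset.sum_mul]
    exact Finset.sum_congr rfl (fun c _ => hterm c j)
  have h2 : ∑ j : ZMod p, (∑ c : ZMod p, chi p (c * (k - j))) * (((Real.sqrt p : ℂ))⁻¹ *
          chi p (-((-(12:ZMod p)⁻¹)*j^3 + (-(8:ZMod p)⁻¹)*j^2)) * v j)
      = (p : ℂ) * (((Real.sqrt p : ℂ))⁻¹ *
          chi p (-((-(12:ZMod p)⁻¹)*k^3 + (-(8:ZMod p)⁻¹)*k^2)) * v k) := by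
    rw [Finset.sum_eq_single k]
    · congr 1
      rw [show k - k = 0 from by ring]
      simp [chi_zero, Finset.card_univ, ZMod.card]
    · intro j _ hjk
      rw [sum_chi_mul p hp3 (k - j) (sub_ne_zero.mpr (Ne.symm hjk)), zero_mul]
    · intro h
      exact absurd (Finset.mem_univ k) h
  rw [h1, h2] at h0
  have hp : (p : ℂ) ≠ 0 := Nat.cast_ne_zero.mpr (by omega)
  have hs : ((Real.sqrt p : ℂ))⁻¹ ≠ 0 := inv_ne_zero (sqrt_ne p)
  exact (mul_ne_zero hp (mul_ne_zero (mul_ne_zero hs (chi_ne_zero p _)) hk)) h0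

end Stmt11Aux

theorem stmt11 (p : ℕ) [Fact p.Prime] (hp3 : 3 < p)
    (weil : ∀ a b c : ZMod p, a ≠ 0 →
      ‖∑ x : ZMod p, chi p (a * x ^ 3 + b * x ^ 2 + c * x)‖ ≤ 2 * Real.sqrt p) :
    ∀ μ : ℂ, (∃ v : ZMod p → ℂ, v ≠ 0 ∧ Sop p *ᵥ v = μ • v) → ‖μ‖ ≤ 4 := by
  rintro μ ⟨v, hv, hev⟩
  open Stmt11Aux in
  obtain ⟨c, hc⟩ := Stmt11Aux.complete p hp3 v hv
  set m : ZMod p → ℂ := magic p (-(12:ZMod p)⁻¹) (-(8:ZMod p)⁻¹) c with hm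
  set lam : ℂ := (Stmt11Aux.Tsum p c * (starRingEnd ℂ) (Stmt11Aux.Tsum p c)) / p with hlam
  have heig := Stmt11Aux.eig p hp3 c
  have hA : ∑ j : ZMod p, (starRingEnd ℂ) (m j) * (Sop p *ᵥ v) j
      = μ * ∑ j : ZMod p, (starRingEnd ℂ) (m j) * v j := by
    rw [hev, Finset.mul_sum]
    refine Finset.sum_congr rfl (fun j _ => ?_)
    simp only [Pi.smul_apply, smul_eq_mul]
    ring
  have hB : ∑ j : ZMod p, (starRingEnd ℂ) (m j) * (Sop p *ᵥ v) j
      = (starRingEnd ℂ) lam * ∑ j : ZMod p, (starRingEnd ℂ) (m j) * v j := by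
    calc ∑ j : ZMod p, (starRingEnd ℂ) (m j) * (Sop p *ᵥ v) j
        = ∑ j : ZMod p, ∑ k : ZMod p, (starRingEnd ℂ) (m j) * (Sop p j k * v k) := by
          refine Finset.sum_congr rfl (fun j _ => ?_)
          rw [Matrix.mulVec, dotProduct, Finset.mul_sum]
      _ = ∑ k : ZMod p, ∑ j : ZMod p, (starRingEnd ℂ) (m j) * (Sop p j k * v k) :=
          Finset.sum_comm
      _ = ∑ k : ZMod p, (∑ j : ZMod p, (starRingEnd ℂ) (m j * Sop p k j)) * v k := by
          refine Finset.sum_congr rfl (fun k _ => ?_)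
          rw [Finset.sum_mul]
          refine Finset.sum_congr rfl (fun j _ => ?_)
          rw [_root_.map_mul, Stmt11Aux.Sop_conj]
          ring
      _ = ∑ k : ZMod p, (starRingEnd ℂ) ((Sop p *ᵥ m) k) * v k := by
          refine Finset.sum_congr rfl (fun k _ => ?_)
          congr 1
          rw [Matrix.mulVec, dotProduct, map_sum (starRingEnd ℂ)]
          refine Finset.sum_congr rfl (fun j _ => ?_)
          rw [_root_.map_mul, _root_.map_mul]
          ring
      _ = (starRingEnd ℂ) lam * ∑ j : ZMod p, (starRingEnd ℂ) (m j) * v j := by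
          rw [Finset.mul_sum]
          refine Finset.sum_congr rfl (fun k _ => ?_)
          rw [heig]
          simp only [Pi.smul_apply, smul_eq_mul, _root_.map_mul]
          ring
  have hmu : μ = (starRingEnd ℂ) lam := mul_right_cancel₀ hc (hA.symm.trans hB)
  have habs : ‖μ‖ = ‖Stmt11Aux.Tsum p c‖
      * ‖Stmt11Aux.Tsum p c‖ / p := by
    rw [hmu, Complex.norm_conj, hlam, norm_div, norm_mul, Complex.norm_conj,
      Complex.norm_natCast]
  have h12 : (-(12:ZMod p)⁻¹ : ZMod p) ≠ 0 :=
    neg_ne_zero.mpr (inv_ne_zero (Stmt11Aux.twelve_ne p hp3))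
  have hw : ‖Stmt11Aux.Tsum p c‖ ≤ 2 * Real.sqrt p :=
    weil (-(12:ZMod p)⁻¹) (-(8:ZMod p)⁻¹) c h12
  have hp0 : (0:ℝ) < p := by positivity
  have hT0 : 0 ≤ ‖Stmt11Aux.Tsum p c‖ := norm_nonneg _
  have hsq : Real.sqrt p * Real.sqrt p = p := Real.mul_self_sqrt hp0.le
  rw [habs, div_le_iff₀ hp0]
  nlinarith [hw, hT0, Real.sqrt_nonneg (p:ℝ)]
end
end

section
/- Let p > 3 be prime, a ∈ Z_p \ {0}, b, c ∈ Z_p. Then D_{(x|z)} |f_{a,0,0}⟩ = γ |f_{a,b,c}⟩ for some unit complex number γ, where x = -b·(3a)^{-1} and z = c - b²·(3a)^{-1} in Z_p; i.e., all magic states with the same cubic coefficient a are related by Weyl-Heisenberg (Pauli) operators up to a global phase. -/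
open Complex Matrix BigOperators Finset
open scoped Kronecker

noncomputable section

/-- Primitive `p`-th root of unity. -/
def zeta (p : ℕ) : ℂ := Complex.exp (2 * Real.pi * Complex.I / p)

lemma chi_eq_zeta (p : ℕ) (a : ZMod p) : chi p a = zeta p ^ a.val := by
  rw [zeta, ← Complex.exp_nat_mul, chi]
  ring_nf

lemma zeta_pow_p (p : ℕ) [NeZero p] : zeta p ^ p = 1 := by
  rw [zeta, ← Complex.exp_nat_mul]
  have hp : (p : ℂ) ≠ 0 := Nat.cast_ne_zero.mpr (NeZero.ne p)
  rw [show (p : ℂ) * (2 * Real.pi * Complex.I / p) = 2 * Real.pi * Complex.I by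
    field_simp]
  simpa [mul_comm] using Complex.exp_two_pi_mul_I

lemma chi_natCast (p : ℕ) [NeZero p] (n : ℕ) : chi p (n : ZMod p) = zeta p ^ n := by
  rw [chi_eq_zeta, ZMod.val_natCast]
  conv_rhs => rw [← Nat.div_add_mod n p, pow_add, pow_mul, zeta_pow_p, one_pow, one_mul]

lemma chi_nsmul (p : ℕ) [NeZero p] (n : ℕ) (a : ZMod p) :
    chi p ((n : ZMod p) * a) = chi p a ^ n := by
  have h : (n : ZMod p) * a = ((n * a.val : ℕ) : ZMod p) := by push_cast; simp
  rw [h, chi_natCast, chi_eq_zeta, ← pow_mul, mul_comm]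

lemma abs_chi (p : ℕ) (a : ZMod p) : ‖chi p a‖ = 1 := by
  have h : 2 * Real.pi * Complex.I * (a.val : ℂ) / p
      = ((2 * Real.pi * a.val / p : ℝ) : ℂ) * Complex.I := by
    push_cast; ring
  rw [chi, h, Complex.norm_exp_ofReal_mul_I]

lemma Xop_mulVec (p : ℕ) [NeZero p] (v : ZMod p → ℂ) :
    Xop p *ᵥ v = fun j => v (j - 1) := by
  funext j
  simp only [Matrix.mulVec, Xop, dotProduct, ite_mul, one_mul, zero_mul]
  have h : ∀ k : ZMod p, (j = k + 1) ↔ (j - 1 = k) := fun k => sub_eq_iff_eq_add.symm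
  simp_rw [h]
  simp [Finset.sum_ite_eq]

lemma Xpow_mulVec (p : ℕ) [NeZero p] (m : ℕ) (v : ZMod p → ℂ) :
    (Xop p ^ m) *ᵥ v = fun j => v (j - (m : ZMod p)) := by
  induction m with
  | zero => funext j; simp [Matrix.one_mulVec]
  | succ m ih =>
      funext j
      rw [pow_succ', ← Matrix.mulVec_mulVec, Xop_mulVec]
      have := congrFun ih (j - 1)
      simp only [this]
      congr 1
      push_cast
      ring

lemma Zpow_mulVec (p : ℕ) [NeZero p] (n : ℕ) (v : ZMod p → ℂ) (j : ZMod p) :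
    ((Zop p ^ n) *ᵥ v) j = chi p j ^ n * v j := by
  rw [Zop, Matrix.diagonal_pow, Matrix.mulVec_diagonal]
  rfl

theorem stmt19 (p : ℕ) [Fact p.Prime] (hp3 : 3 < p) (a b c : ZMod p) (ha : a ≠ 0) :
    ∃ γ : ℂ, ‖γ‖ = 1 ∧
      Dop p (-b * (3 * a)⁻¹) (c - b ^ 2 * (3 * a)⁻¹) *ᵥ magic p a 0 0
        = γ • magic p a b c := by
  have h2 : (2 : ZMod p) ≠ 0 := by
    intro h
    have hd : p ∣ 2 := (ZMod.natCast_eq_zero_iff 2 p).mp (by exact_mod_cast h)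
    have := Nat.le_of_dvd (by norm_num) hd; omega
  have h3 : (3 : ZMod p) ≠ 0 := by
    intro h
    have hd : p ∣ 3 := (ZMod.natCast_eq_zero_iff 3 p).mp (by exact_mod_cast h)
    have := Nat.le_of_dvd (by norm_num) hd; omega
  have h3a : (3 : ZMod p) * a ≠ 0 := mul_ne_zero h3 ha
  set x : ZMod p := -b * (3 * a)⁻¹ with hx
  set z : ZMod p := c - b ^ 2 * (3 * a)⁻¹ with hz
  refine ⟨chi p (-((2 : ZMod p)⁻¹ * x * z) - a * x ^ 3), abs_chi p _, ?_⟩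
  funext j
  rw [Dop, Matrix.smul_mulVec, ← Matrix.mulVec_mulVec, Xpow_mulVec]
  simp only [Pi.smul_apply, smul_eq_mul, ZMod.natCast_val, ZMod.cast_id]
  rw [Zpow_mulVec, ← chi_nsmul]
  simp only [ZMod.natCast_val, ZMod.cast_id, magic]
  have key : (2 : ZMod p)⁻¹ * x * z + z * (j - x)
      + (a * (j - x) ^ 3 + 0 * (j - x) ^ 2 + 0 * (j - x))
      = (-((2 : ZMod p)⁻¹ * x * z) - a * x ^ 3) + (a * j ^ 3 + b * j ^ 2 + c * j) := by
    have ht : (3 : ZMod p) * a * (3 * a)⁻¹ = 1 := mul_inv_cancel₀ h3a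
    have hu : (2 : ZMod p) * (2 : ZMod p)⁻¹ = 1 := mul_inv_cancel₀ h2
    rw [hx, hz]
    linear_combination (b * j ^ 2 + b ^ 2 * (3 * a)⁻¹ * j) * ht
      + (b ^ 3 * (3 * a)⁻¹ ^ 2 - b * c * (3 * a)⁻¹) * hu
  have hc : chi p ((2 : ZMod p)⁻¹ * x * z) * chi p (z * (j - x))
      * chi p (a * (j - x) ^ 3 + 0 * (j - x) ^ 2 + 0 * (j - x))
      = chi p (-((2 : ZMod p)⁻¹ * x * z) - a * x ^ 3)
        * chi p (a * j ^ 3 + b * j ^ 2 + c * j) := by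
    rw [← chi_add, ← chi_add, ← chi_add, key]
  linear_combination ((Real.sqrt p : ℂ))⁻¹ * hc
end
end
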